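/- Let (X,σ) be a two-sided subshift over a finite alphabet that is proximal, has no isolated points, and admits a dense scrambled set S. Then (X,σ) is Li–Yorke sensitive: there exists ε > 0 such that every x ∈ X is a limit of points y with (x,y) proximal and limsup_{n→∞} d(σ^n(x), σ^n(y)) ≥ ε. -/

import Mathlib

open Filter Topology Classical

/-- The shift map on two-sided sequences. -/
def shiftMap {A : Type*} (x : ℤ → A) : ℤ → A := fun n => x (n + 1)

/-- The standard metric on a two-sided shift space:
`d(x,y) = 2^{-min{|n| : x n ≠ y n}}`, and `0` if `x = y`. -/
noncomputable def subshiftDist {A : Type*} (x y : ℤ → A) : ℝ :=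
  if x = y then 0
  else (2 : ℝ) ^ (-((sInf {k : ℕ | ∃ n : ℤ, n.natAbs = k ∧ x n ≠ y n} : ℕ) : ℤ))

lemma shift_iter {A : Type*} (x : ℤ → A) (n : ℕ) (m : ℤ) :
    (shiftMap^[n] x) m = x (m + n) := by
  induction n generalizing m with
  | zero => simp
  | succ k ih =>
    rw [Function.iterate_succ_apply']
    simp only [shiftMap, ih]
    congr 1
    push_cast
    ring

lemma subshiftDist_nonneg {A : Type*} (x y : ℤ → A) : 0 ≤ subshiftDist x y := by
  unfold subshiftDist
  split
  · exact le_rfl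
  · positivity

lemma subshiftDist_le_one {A : Type*} (x y : ℤ → A) : subshiftDist x y ≤ 1 := by
  unfold subshiftDist
  split
  · norm_num
  · exact zpow_le_one_of_nonpos₀ one_le_two (by simp)

lemma subshiftDist_eq_one {A : Type*} {x y : ℤ → A} (h : x 0 ≠ y 0) :
    subshiftDist x y = 1 := by
  have hxy : x ≠ y := fun he => h (congrFun he 0)
  unfold subshiftDist
  rw [if_neg hxy]
  have h0 : sInf {k : ℕ | ∃ n : ℤ, n.natAbs = k ∧ x n ≠ y n} = 0 :=
    Nat.sInf_eq_zero.2 (Or.inl ⟨0, rfl, h⟩)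
  rw [h0]
  norm_num

lemma subshiftDist_le {A : Type*} {x y : ℤ → A} {N : ℕ}
    (h : ∀ n : ℤ, n.natAbs ≤ N → x n = y n) :
    subshiftDist x y ≤ (2 : ℝ) ^ (-((N : ℤ) + 1)) := by
  unfold subshiftDist
  split
  · positivity
  · next hxy =>
    set K := {k : ℕ | ∃ n : ℤ, n.natAbs = k ∧ x n ≠ y n} with hK
    have hKne : K.Nonempty := by
      have : ∃ n, x n ≠ y n := by
        by_contra h'
        push_neg at h'
        exact hxy (funext h')
      obtain ⟨n, hn⟩ := this
      exact ⟨n.natAbs, n, rfl, hn⟩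
    obtain ⟨n, hn, hne⟩ := Nat.sInf_mem hKne
    have hlt : N < sInf K := by
      by_contra hle
      push_neg at hle
      exact hne (h n (by omega))
    apply zpow_le_zpow_right₀ one_le_two
    omega

/-- If two sequences eventually agree on the right, distances of iterates tend to 0. -/
lemma tendsto_dist_zero {A : Type*} {z w : ℤ → A} {N : ℤ}
    (hN : ∀ j : ℤ, N ≤ j → z j = w j) :
    Filter.Tendsto (fun n => subshiftDist (shiftMap^[n] z) (shiftMap^[n] w))
      Filter.atTop (nhds 0) := by
  rw [Metric.tendsto_atTop]
  intro ε hε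
  obtain ⟨M, hM⟩ := exists_pow_lt_of_lt_one hε (by norm_num : (1 / 2 : ℝ) < 1)
  have hM' : (2 : ℝ) ^ (-((M : ℤ) + 1)) < ε := by
    calc (2 : ℝ) ^ (-((M : ℤ) + 1)) ≤ (2 : ℝ) ^ (-(M : ℤ)) :=
          zpow_le_zpow_right₀ one_le_two (by omega)
      _ = (1 / 2 : ℝ) ^ M := by
          rw [one_div, inv_pow, ← zpow_natCast, ← zpow_neg]
      _ < ε := hM
  refine ⟨(N + M).toNat, fun n hn => ?_⟩
  have hnz : (n : ℤ) ≥ N + M := le_trans (Int.self_le_toNat _) (by exact_mod_cast hn)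
  have hle : subshiftDist (shiftMap^[n] z) (shiftMap^[n] w) ≤ (2 : ℝ) ^ (-((M : ℤ) + 1)) := by
    apply subshiftDist_le
    intro m hm
    rw [shift_iter, shift_iter]
    apply hN
    omega
  rw [Real.dist_eq, sub_zero, abs_of_nonneg (subshiftDist_nonneg _ _)]
  exact lt_of_le_of_lt hle hM'

theorem stmt6 {A : Type*} [Fintype A] [TopologicalSpace A] [DiscreteTopology A]
    (S : Set (ℤ → A)) (hcl : IsClosed S) (hinv : shiftMap '' S = S)
    -- the system is proximal
    (hprox : ∀ x ∈ S, ∀ y ∈ S, Filter.liminf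
      (fun n => subshiftDist (shiftMap^[n] x) (shiftMap^[n] y)) Filter.atTop = 0)
    -- no isolated points
    (hperf : Perfect S)
    -- a dense scrambled subset
    (Sc : Set (ℤ → A)) (hSc : Sc ⊆ S) (hdense : S ⊆ closure Sc)
    (hscr : ∀ x ∈ Sc, ∀ y ∈ Sc, x ≠ y →
      Filter.liminf
        (fun n => subshiftDist (shiftMap^[n] x) (shiftMap^[n] y)) Filter.atTop = 0 ∧
      0 < Filter.limsup
        (fun n => subshiftDist (shiftMap^[n] x) (shiftMap^[n] y)) Filter.atTop) :
    -- Li–Yorke sensitivity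
    ∃ ε > (0 : ℝ), ∀ x ∈ S, ∀ δ > (0 : ℝ), ∃ y ∈ S, y ≠ x ∧
      subshiftDist x y < δ ∧
      Filter.liminf
        (fun n => subshiftDist (shiftMap^[n] x) (shiftMap^[n] y)) Filter.atTop = 0 ∧
      ε ≤ Filter.limsup
        (fun n => subshiftDist (shiftMap^[n] x) (shiftMap^[n] y)) Filter.atTop := by
  refine ⟨1, one_pos, ?_⟩
  intro x hx δ hδ
  -- choose N with 2^{-(N+1)} < δ
  obtain ⟨N, hNδ⟩ : ∃ N : ℕ, (2 : ℝ) ^ (-((N : ℤ) + 1)) < δ := by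
    obtain ⟨M, hM⟩ := exists_pow_lt_of_lt_one hδ (by norm_num : (1 / 2 : ℝ) < 1)
    refine ⟨M, ?_⟩
    calc (2 : ℝ) ^ (-((M : ℤ) + 1)) ≤ (2 : ℝ) ^ (-(M : ℤ)) :=
          zpow_le_zpow_right₀ one_le_two (by omega)
      _ = (1 / 2 : ℝ) ^ M := by rw [one_div, inv_pow, ← zpow_natCast, ← zpow_neg]
      _ < δ := hM
  set U := {y : ℤ → A | ∀ n : ℤ, n.natAbs ≤ N → y n = x n} with hU
  have hUopen : IsOpen U := by
    have hfin : ({n : ℤ | n.natAbs ≤ N}).Finite :=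
      Set.Finite.subset (Set.finite_Icc (-(N : ℤ)) N) (fun n hn => by
        simp only [Set.mem_Icc]; simp only [Set.mem_setOf_eq] at hn; omega)
    have : U = ⋂ n ∈ {n : ℤ | n.natAbs ≤ N}, {y : ℤ → A | y n = x n} := by
      ext y; simp [hU]
    rw [this]
    apply hfin.isOpen_biInter
    intro n _
    have he : {y : ℤ → A | y n = x n} = (fun y : ℤ → A => y n) ⁻¹' {x n} := rfl
    rw [he]
    exact (continuous_apply n).isOpen_preimage _ (isOpen_discrete _)
  have hxU : x ∈ U := fun n _ => rfl
  have hUd : ∀ y ∈ U, subshiftDist x y < δ := fun y hy =>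
    lt_of_le_of_lt (subshiftDist_le (fun n hn => (hy n hn).symm)) hNδ
  -- get z ∈ Sc ∩ U
  obtain ⟨z, hzU, hzSc⟩ := mem_closure_iff.1 (hdense hx) U hUopen hxU
  -- get s ∈ S ∩ U with s ≠ z
  obtain ⟨s, hsU, hsS, hsz⟩ : ∃ s, s ∈ U ∧ s ∈ S ∧ s ≠ z := by
    by_cases hzx : z = x
    · obtain ⟨s, ⟨hs1, hs2⟩, hs3⟩ := accPt_iff_nhds.mp (hperf.acc x hx) U (hUopen.mem_nhds hxU)
      exact ⟨s, hs1, hs2, hzx ▸ hs3⟩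
    · exact ⟨x, hxU, hx, fun h => hzx h.symm⟩
  -- get w ∈ Sc ∩ U with w ≠ z
  obtain ⟨w, ⟨hwU, hwz⟩, hwSc⟩ := mem_closure_iff.1 (hdense hsS) (U ∩ {z}ᶜ)
    (hUopen.inter isClosed_singleton.isOpen_compl) ⟨hsU, hsz⟩
  have hzw : z ≠ w := fun h => hwz (h ▸ rfl)
  obtain ⟨hli, hls⟩ := hscr z hzSc w hwSc hzw
  -- z and w differ at arbitrarily large positive coordinates
  have hub : ∀ M : ℤ, ∃ j, M ≤ j ∧ z j ≠ w j := by
    by_contra h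
    push_neg at h
    obtain ⟨M, hM⟩ := h
    have := (tendsto_dist_zero (fun j hj => hM j hj)).limsup_eq
    rw [this] at hls
    exact lt_irrefl 0 hls
  -- one of z, w differs from x at arbitrarily large coordinates
  have hone : (∀ M : ℤ, ∃ j, M ≤ j ∧ x j ≠ z j) ∨ (∀ M : ℤ, ∃ j, M ≤ j ∧ x j ≠ w j) := by
    by_contra h
    push_neg at h
    obtain ⟨⟨M₁, h₁⟩, ⟨M₂, h₂⟩⟩ := h
    obtain ⟨j, hj, hne⟩ := hub (max M₁ M₂)
    exact hne ((h₁ j (le_trans (le_max_left _ _) hj)).symm.trans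
      (h₂ j (le_trans (le_max_right _ _) hj)))
  -- the common final argument
  have main : ∀ y, y ∈ Sc → y ∈ U → (∀ M : ℤ, ∃ j, M ≤ j ∧ x j ≠ y j) →
      ∃ y ∈ S, y ≠ x ∧ subshiftDist x y < δ ∧
      Filter.liminf
        (fun n => subshiftDist (shiftMap^[n] x) (shiftMap^[n] y)) Filter.atTop = 0 ∧
      1 ≤ Filter.limsup
        (fun n => subshiftDist (shiftMap^[n] x) (shiftMap^[n] y)) Filter.atTop := by
    intro y hySc hyU hdiff
    have hyS : y ∈ S := hSc hySc
    refine ⟨y, hyS, ?_, hUd y hyU, hprox x hx y hyS, ?_⟩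
    · obtain ⟨j, _, hne⟩ := hdiff 0
      exact fun he => hne (by rw [he])
    · apply le_limsup_of_frequently_le
      · rw [frequently_atTop]
        intro a
        obtain ⟨j, hj, hne⟩ := hdiff a
        have hj0 : (0 : ℤ) ≤ j := le_trans (Int.ofNat_nonneg a) hj
        refine ⟨j.toNat, by omega, ?_⟩
        have h0 : (shiftMap^[j.toNat] x) 0 ≠ (shiftMap^[j.toNat] y) 0 := by
          rw [shift_iter, shift_iter]
          simpa [Int.toNat_of_nonneg hj0] using hne
        rw [subshiftDist_eq_one h0]
      · exact isBoundedUnder_of ⟨1, fun n => subshiftDist_le_one _ _⟩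
  rcases hone with h | h
  · exact main z hzSc hzU h
  · exact main w hwSc hwU h
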